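/- Let S be an almost Clifford semigroup, i.e., the complement S \ H(S) of the Clifford part is finite. Then for every infinite subset A ⊆ S the set AA = {xy : x,y ∈ A} is infinite. -/

import Mathlib

/-- `spow x n` denotes the power `x^(n+1)` in a semigroup (so exponents `n ≥ 1` are
the values `spow x (n-1)`). -/
def spow {S : Type*} [Semigroup S] (x : S) : ℕ → S
  | 0 => x
  | n + 1 => spow x n * x

/-- The `H`-class of `a` in a semigroup `S`:
`H_a = {x ∈ S | xS¹ = aS¹ ∧ S¹x = S¹a}`, computed in `S¹ = WithOne S`. -/
def HClass {S : Type*} [Semigroup S] (a : S) : Set S :=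
  {x | {y : WithOne S | ∃ s : WithOne S, y = (x : WithOne S) * s} =
         {y : WithOne S | ∃ s : WithOne S, y = (a : WithOne S) * s} ∧
       {y : WithOne S | ∃ s : WithOne S, y = s * (x : WithOne S)} =
         {y : WithOne S | ∃ s : WithOne S, y = s * (a : WithOne S)}}

/-- The center `Z(S)` of a semigroup. -/
def centerSet (S : Type*) [Semigroup S] : Set S := {z : S | ∀ x : S, z * x = x * z}

/-- The Clifford part `H(S)`: the union of all `H`-classes of idempotents
(equivalently, of all maximal subgroups). -/
def CliffordPart (S : Type*) [Semigroup S] : Set S :=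
  {x : S | ∃ e : S, IsIdempotentElem e ∧ x ∈ HClass e}

/-- A semigroup is chain-finite if it contains no infinite chain, where a chain
is a set `C` with `x * y ∈ {x, y}` for all `x, y ∈ C`. -/
def ChainFinite (S : Type*) [Semigroup S] : Prop :=
  ∀ C : Set S, (∀ x ∈ C, ∀ y ∈ C, x * y = x ∨ x * y = y) → C.Finite

/-- A semigroup is periodic if every element has an idempotent power `x^n`, `n ≥ 1`. -/
def IsPeriodicSemigroup (S : Type*) [Semigroup S] : Prop :=
  ∀ x : S, ∃ n : ℕ, IsIdempotentElem (spow x n)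

/-- The maximal subgroup `H_e` of an idempotent `e` is bounded: some power `n ≥ 1`
of every element equals `e`. -/
def BoundedHClass {S : Type*} [Semigroup S] (e : S) : Prop :=
  ∃ n : ℕ, ∀ x ∈ HClass e, spow x n = e

/-- A semigroup `X` is `T₁S`-closed if for every topological semigroup `Y`
satisfying the `T₁` separation axiom and every injective homomorphism `h : X → Y`
with discrete image, the image of `h` is closed in `Y`. -/
def IsT1SClosed (X : Type*) [Semigroup X] : Prop :=
  ∀ (Y : Type*) [Semigroup Y] [TopologicalSpace Y] [ContinuousMul Y] [T1Space Y],
    ∀ h : X →ₙ* Y, Function.Injective h → DiscreteTopology (Set.range h) →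
      IsClosed (Set.range h)

/-- A semigroup `X` is `TzS`-closed if for every Hausdorff zero-dimensional
topological semigroup `Y` (i.e. the clopen sets form a base of the topology) and
every injective homomorphism `h : X → Y` with discrete image, the image of `h`
is closed in `Y`. -/
def IsTzSClosed (X : Type*) [Semigroup X] : Prop :=
  ∀ (Y : Type*) [Semigroup Y] [TopologicalSpace Y] [ContinuousMul Y] [T2Space Y],
    TopologicalSpace.IsTopologicalBasis {s : Set Y | IsClopen s} →
    ∀ h : X →ₙ* Y, Function.Injective h → DiscreteTopology (Set.range h) →
      IsClosed (Set.range h)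

section AuxAC

variable {S : Type*} [Semigroup S]

lemma AC.hclass_symm {e x : S} (h : x ∈ HClass e) : e ∈ HClass x :=
  ⟨h.1.symm, h.2.symm⟩

lemma AC.hclass_trans {e f x : S} (h1 : x ∈ HClass e) (h2 : e ∈ HClass f) : x ∈ HClass f :=
  ⟨h1.1.trans h2.1, h1.2.trans h2.2⟩

lemma AC.exists_right {e x : S} (h : x ∈ HClass e) :
    ∃ s : WithOne S, (e : WithOne S) = (x : WithOne S) * s := by
  have he : (e : WithOne S) ∈ {y : WithOne S | ∃ s : WithOne S, y = (e : WithOne S) * s} :=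
    ⟨1, (mul_one _).symm⟩
  rw [← h.1] at he
  exact he

lemma AC.exists_left {e x : S} (h : x ∈ HClass e) :
    ∃ s : WithOne S, (e : WithOne S) = s * (x : WithOne S) := by
  have he : (e : WithOne S) ∈ {y : WithOne S | ∃ s : WithOne S, y = s * (e : WithOne S)} :=
    ⟨1, (one_mul _).symm⟩
  rw [← h.2] at he
  exact he

lemma AC.coe_idem {e : S} (he : IsIdempotentElem e) :
    (e : WithOne S) * (e : WithOne S) = (e : WithOne S) := by
  rw [← WithOne.coe_mul, he]

lemma AC.e_mul {e x : S} (he : IsIdempotentElem e) (h : x ∈ HClass e) :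
    (e : WithOne S) * (x : WithOne S) = (x : WithOne S) := by
  obtain ⟨s, hs⟩ := AC.exists_right (AC.hclass_symm h)
  rw [hs, ← mul_assoc, AC.coe_idem he]

lemma AC.mul_e {e x : S} (he : IsIdempotentElem e) (h : x ∈ HClass e) :
    (x : WithOne S) * (e : WithOne S) = (x : WithOne S) := by
  obtain ⟨s, hs⟩ := AC.exists_left (AC.hclass_symm h)
  rw [hs, mul_assoc, AC.coe_idem he]

lemma AC.sq_mem {e x : S} (he : IsIdempotentElem e) (h : x ∈ HClass e) :
    x * x ∈ HClass e := by
  obtain ⟨t, ht⟩ := AC.exists_right h   -- e = x * t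
  obtain ⟨u, hu⟩ := AC.exists_left h    -- e = u * x
  have hxx : (x : WithOne S) = (x : WithOne S) * x * t := by
    conv_lhs => rw [← AC.mul_e he h, ht, ← mul_assoc]
  have hxx' : (x : WithOne S) = u * ((x : WithOne S) * x) := by
    conv_lhs => rw [← AC.e_mul he h, hu, mul_assoc]
  constructor
  · rw [← h.1]
    ext y
    simp only [Set.mem_setOf_eq, WithOne.coe_mul]
    constructor
    · rintro ⟨s, rfl⟩
      exact ⟨x * s, by rw [mul_assoc]⟩
    · rintro ⟨s, rfl⟩
      exact ⟨t * s, by rw [← mul_assoc, ← hxx]⟩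
  · rw [← h.2]
    ext y
    simp only [Set.mem_setOf_eq, WithOne.coe_mul]
    constructor
    · rintro ⟨s, rfl⟩
      exact ⟨s * x, by rw [mul_assoc]⟩
    · rintro ⟨s, rfl⟩
      exact ⟨s * u, by rw [mul_assoc, ← hxx']⟩

lemma AC.left_cancel {e a y z : S} (he : IsIdempotentElem e)
    (ha : a ∈ HClass e) (hy : y ∈ HClass e) (hz : z ∈ HClass e)
    (h : a * y = a * z) : y = z := by
  obtain ⟨t, ht⟩ := AC.exists_left ha   -- e = t * a
  have h1 : (e : WithOne S) * y = y := AC.e_mul he hy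
  have h2 : (e : WithOne S) * z = z := AC.e_mul he hz
  have key : (y : WithOne S) = (z : WithOne S) := by
    rw [← h1, ← h2, ht, mul_assoc, mul_assoc, ← WithOne.coe_mul, ← WithOne.coe_mul, h]
  exact_mod_cast key

lemma AC.idem_unique {e f x : S} (he : IsIdempotentElem e) (hf : IsIdempotentElem f)
    (hxe : x ∈ HClass e) (hxf : x ∈ HClass f) : e = f := by
  have hfe : f ∈ HClass e := AC.hclass_trans (AC.hclass_symm hxf) hxe
  have h1 : (f : WithOne S) * (e : WithOne S) = (e : WithOne S) :=
    AC.e_mul hf (AC.hclass_symm hfe)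
  have h2 : (f : WithOne S) * (e : WithOne S) = (f : WithOne S) :=
    AC.mul_e he hfe
  exact_mod_cast h1.symm.trans h2

end AuxAC

theorem statement19 {S : Type*} [Semigroup S]
    (hac : (Set.univ \ CliffordPart S).Finite) :
    ∀ A : Set S, A.Infinite → (Set.image2 (· * ·) A A).Infinite := by
  intro A hA
  by_contra hfin
  rw [Set.not_infinite] at hfin
  -- A ∩ CliffordPart S is infinite
  have hB : (A ∩ CliffordPart S).Infinite := by
    refine Set.Infinite.mono ?_ (hA.diff hac)
    rintro x ⟨hxA, hx⟩
    refine ⟨hxA, ?_⟩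
    by_contra hc
    exact hx ⟨trivial, hc⟩
  set B := A ∩ CliffordPart S with hBdef
  -- squares of B land in the finite set AA
  have hBsub : (fun x => x * x) '' B ⊆ Set.image2 (· * ·) A A := by
    rintro _ ⟨x, hx, rfl⟩
    exact ⟨x, hx.1, x, hx.1, rfl⟩
  have himg : ((fun x => x * x) '' B).Finite := hfin.subset hBsub
  -- pigeonhole: some fiber of squaring is infinite
  have hfiber : ∃ c ∈ (fun x => x * x) '' B, {x ∈ B | x * x = c}.Infinite := by
    by_contra hcon
    push_neg at hcon
    have hcov : B ⊆ ⋃ c ∈ (fun x => x * x) '' B, {x ∈ B | x * x = c} := by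
      intro x hx
      exact Set.mem_biUnion ⟨x, hx, rfl⟩ ⟨hx, rfl⟩
    have : B.Finite :=
      (Set.Finite.biUnion himg fun c hc => hcon c hc).subset hcov
    exact hB this
  obtain ⟨c, _, hF⟩ := hfiber
  set F := {x ∈ B | x * x = c} with hFdef
  obtain ⟨a, ha⟩ := hF.nonempty
  obtain ⟨e, he, hae⟩ := ha.1.2
  -- every element of F lies in HClass e
  have hFe : ∀ x ∈ F, x ∈ HClass e := by
    rintro x ⟨hxB, hxc⟩
    obtain ⟨f, hf, hxf⟩ := hxB.2
    have hsq : x * x ∈ HClass f := AC.sq_mem hf hxf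
    have hsq' : x * x ∈ HClass e := by
      rw [hxc, ← ha.2]
      exact AC.sq_mem he hae
    have : f = e := AC.idem_unique hf he hsq hsq'
    rwa [← this]
  -- left multiplication by a is injective on F, but lands in AA
  have hinj : Set.InjOn (fun x => a * x) F := by
    intro x hx y hy hxy
    exact AC.left_cancel he hae (hFe x hx) (hFe y hy) hxy
  have hmap : (fun x => a * x) '' F ⊆ Set.image2 (· * ·) A A := by
    rintro _ ⟨x, hx, rfl⟩
    exact ⟨a, ha.1.1, x, hx.1.1, rfl⟩
  have : F.Finite := Set.Finite.of_finite_image (hfin.subset hmap) hinj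
  exact hF this
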